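/- arXiv:math/0003219 — 2 statements merged into one kernel-verified Lean document; each statement's English description precedes it below -/
import Mathlib

section
/- Let H be any subgroup of SL_n(ℤ). The bottom row map induces a bijection between the set of double cosets Γ₀(N)\SL_n(ℤ)/H and the set of orbits of the right action of H on ℙ^{n-1}(ℤ/Nℤ), sending the double coset Γ₀(N)γH to the H-orbit of 𝔟(γ). -/
open Matrix

/-- `SL_n(ℤ)`, the special linear group of `n × n` integer matrices of determinant 1. -/
abbrev SL (n : ℕ) := Matrix.SpecialLinearGroup (Fin n) ℤ

/-- `Γ₀(N)`: the matrices in `SL_{n+1}(ℤ)` whose bottom row is congruent to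
`(0, …, 0, *)` mod `N`, i.e. all bottom-row entries except the last are divisible by `N`. -/
def Gamma0 (N : ℕ) {n : ℕ} (γ : SL (n + 1)) : Prop :=
  ∀ j : Fin (n + 1), j ≠ Fin.last n → (N : ℤ) ∣ γ.1 (Fin.last n) j

/-- A row vector over `ℤ/Nℤ` is primitive if its coordinates generate the unit ideal. -/
def IsPrimitive {m N : ℕ} (v : Fin m → ZMod N) : Prop :=
  Ideal.span (Set.range v) = ⊤

/-- Primitive row vectors over `ℤ/Nℤ`. -/
def PrimVec (m N : ℕ) := {v : Fin m → ZMod N // IsPrimitive v}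

/-- Projective equivalence: two primitive vectors are equivalent iff they differ by
multiplication by a unit of `ℤ/Nℤ`. -/
instance projSetoid (m N : ℕ) : Setoid (PrimVec m N) where
  r v w := ∃ u : (ZMod N)ˣ, w.1 = fun i => (u : ZMod N) * v.1 i
  iseqv := by
    refine ⟨fun v => ⟨1, by funext i; simp⟩, ?_, ?_⟩
    · rintro ⟨v, hv⟩ ⟨w, hw⟩ ⟨u, h⟩
      replace h : w = fun i => (u : ZMod N) * v i := h
      refine ⟨u⁻¹, ?_⟩
      funext i
      simp [h]
    · rintro ⟨v, hv⟩ ⟨w, hw⟩ ⟨x, hx⟩ ⟨u, h⟩ ⟨u', h'⟩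
      replace h : w = fun i => (u : ZMod N) * v i := h
      replace h' : x = fun i => (u' : ZMod N) * w i := h'
      refine ⟨u' * u, ?_⟩
      funext i
      simp [h', h, mul_assoc]

/-- `ℙ^{m-1}(ℤ/Nℤ)`: primitive row vectors modulo multiplication by units of `ℤ/Nℤ`. -/
def Proj (m N : ℕ) := Quotient (projSetoid m N)

/-- Reduction of an integral matrix mod `N`. -/
def modN {n N : ℕ} (γ : SL n) : Matrix (Fin n) (Fin n) (ZMod N) :=
  γ.1.map (Int.cast : ℤ → ZMod N)

lemma modN_det {n N : ℕ} (γ : SL n) : (modN (N := N) γ).det = 1 := by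
  have := (Int.castRingHom (ZMod N)).map_det γ.1
  simpa [modN, γ.2] using this.symm

lemma primitive_vecMul {m N : ℕ} (v : Fin m → ZMod N) (hv : IsPrimitive v) (γ : SL m) :
    IsPrimitive (Matrix.vecMul v (modN γ)) := by
  set A := modN (N := N) γ with hAdef
  have : Invertible A := Matrix.invertibleOfIsUnitDet A (by rw [modN_det]; exact isUnit_one)
  have hvw : v = Matrix.vecMul (Matrix.vecMul v A) (⅟A) := by
    rw [Matrix.vecMul_vecMul, mul_invOf_self, Matrix.vecMul_one]
  refine eq_top_iff.mpr ?_
  rw [_root_.IsPrimitive] at hv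
  rw [← hv]
  refine Ideal.span_le.mpr ?_
  rintro x ⟨j, rfl⟩
  have hj : v j = ∑ i, Matrix.vecMul v A i * (⅟A) i j := congrFun hvw j
  rw [hj]
  exact Ideal.sum_mem _ fun i _ =>
    Ideal.mul_mem_right _ _ (Ideal.subset_span ⟨i, rfl⟩)

lemma vecMul_const_mul {m : ℕ} {R : Type*} [CommRing R] (c : R) (v : Fin m → R)
    (A : Matrix (Fin m) (Fin m) R) :
    Matrix.vecMul (fun i => c * v i) A = fun j => c * Matrix.vecMul v A j := by
  funext j
  simp [Matrix.vecMul, dotProduct, Finset.mul_sum, mul_assoc]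

/-- The map on primitive vectors underlying the right action of `SL_m(ℤ)`. -/
def ractFun {m N : ℕ} (γ : SL m) (v : PrimVec m N) : PrimVec m N :=
  ⟨Matrix.vecMul v.1 (modN γ), primitive_vecMul v.1 v.2 γ⟩

lemma ractFun_compat {m N : ℕ} (γ : SL m) :
    ∀ v w : PrimVec m N, v ≈ w → ractFun γ v ≈ ractFun γ w := by
  rintro ⟨v, hv⟩ ⟨w, hw⟩ ⟨u, h⟩
  replace h : w = fun i => (u : ZMod N) * v i := h
  refine ⟨u, ?_⟩
  show Matrix.vecMul w (modN γ) = _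
  rw [h, vecMul_const_mul]
  rfl

/-- The right action of `SL_m(ℤ)` on `ℙ^{m-1}(ℤ/Nℤ)`: reduce the matrix mod `N` and
multiply the row vector on the right. -/
def ract {m N : ℕ} (x : Proj m N) (γ : SL m) : Proj m N :=
  Quotient.map (ractFun γ) (ractFun_compat γ) x

lemma brow_primitive {n N : ℕ} (γ : SL (n + 1)) :
    IsPrimitive (fun j => ((γ.1 (Fin.last n) j : ℤ) : ZMod N)) := by
  rw [_root_.IsPrimitive, Ideal.eq_top_iff_one]
  have hdet : γ.1.det = 1 := γ.2
  have hexp := Matrix.det_succ_row γ.1 (Fin.last n)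
  have key : ((γ.1.det : ℤ) : ZMod N) ∈
      Ideal.span (Set.range fun j => ((γ.1 (Fin.last n) j : ℤ) : ZMod N)) := by
    rw [hexp]
    push_cast
    refine Ideal.sum_mem _ fun j _ => ?_
    exact Ideal.mul_mem_right _ _ (Ideal.mul_mem_left _ _ (Ideal.subset_span ⟨j, rfl⟩))
  rw [hdet] at key
  simpa using key

/-- The bottom row map `𝔟 : SL_{n+1}(ℤ) → ℙ^n(ℤ/Nℤ)`: the class of the bottom row
of the matrix, reduced mod `N`. -/
def brow {n : ℕ} (N : ℕ) (γ : SL (n + 1)) : Proj (n + 1) N :=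
  ⟦⟨fun j => ((γ.1 (Fin.last n) j : ℤ) : ZMod N), brow_primitive γ⟩⟧

lemma modN_mul {n N : ℕ} (A B : SL n) : modN (N := N) (A * B) = modN A * modN B := by
  simp only [modN, Matrix.SpecialLinearGroup.coe_mul]
  exact Matrix.map_mul (f := Int.castRingHom (ZMod N))

lemma modN_one {n N : ℕ} : modN (N := N) (1 : SL n) = 1 := by
  simp only [modN, Matrix.SpecialLinearGroup.coe_one]
  exact Matrix.map_one _ (by simp) (by simp)

/-- The bottom row of a matrix, reduced mod `N`, as a vector. -/
def vrow {n N : ℕ} (A : SL (n+1)) : Fin (n+1) → ZMod N :=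
  fun j => ((A.1 (Fin.last n) j : ℤ) : ZMod N)

lemma vrow_eq_modN {n N : ℕ} (A : SL (n+1)) : vrow (N := N) A = modN A (Fin.last n) := rfl

lemma vrow_mul {n N : ℕ} (A B : SL (n+1)) :
    vrow (N := N) (A * B) = Matrix.vecMul (vrow A) (modN B) := by
  funext j
  rw [vrow_eq_modN, modN_mul]
  simp [Matrix.vecMul, Matrix.mul_apply, dotProduct, vrow, modN]

lemma span_range_top_of_gcd_one {m : ℕ} (g : Fin m → ℤ)
    (hg : Finset.univ.gcd g = 1) : Ideal.span (Set.range g) = ⊤ := by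
  obtain ⟨e, he⟩ := (Ideal.span (Set.range g)).isPrincipal_iff.mp inferInstance
  have hmem : ∀ j, g j ∈ Submodule.span ℤ {e} := fun j => he ▸ Ideal.subset_span ⟨j, rfl⟩
  have hdvd : ∀ j, e ∣ g j := fun j => Ideal.mem_span_singleton.mp (hmem j)
  have h1 : e ∣ 1 := hg ▸ Finset.dvd_gcd fun j _ => hdvd j
  rw [he]
  show Ideal.span {e} = ⊤
  rw [Ideal.span_singleton_eq_top]
  exact isUnit_of_dvd_one h1

lemma exists_SL_row {m : ℕ} (hm : 1 ≤ m) (g : Fin (m+1) → ℤ)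
    (hg : Ideal.span (Set.range g) = ⊤) :
    ∃ γ : SL (m+1), γ.1 (Fin.last m) = g := by
  -- get c with ∑ c j * g j = 1
  have h1 : (1 : ℤ) ∈ Ideal.span (Set.range g) := hg ▸ trivial
  rw [Ideal.span, Submodule.mem_span_range_iff_exists_fun] at h1
  obtain ⟨c, hc⟩ := h1
  -- the linear functional φ
  let φ : (Fin (m+1) → ℤ) →ₗ[ℤ] ℤ :=
    { toFun := fun x => ∑ j, c j * x j
      map_add' := by intro x y; simp [mul_add, Finset.sum_add_distrib]
      map_smul' := by
        intro r x
        simp only [Pi.smul_apply, smul_eq_mul, RingHom.id_apply, Finset.mul_sum]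
        exact Finset.sum_congr rfl fun j _ => by ring }
  have hφg : φ g = 1 := by simpa [φ, smul_eq_mul] using hc
  -- basis of the kernel
  obtain ⟨k, bk⟩ := Submodule.basisOfPid (Pi.basisFun ℤ (Fin (m+1))) (LinearMap.ker φ)
  -- the equiv ℤ × ker φ ≃ ℤ^{m+1}
  let f : (ℤ × LinearMap.ker φ) →ₗ[ℤ] (Fin (m+1) → ℤ) :=
    (LinearMap.fst ℤ ℤ (LinearMap.ker φ)).smulRight g +
      (LinearMap.ker φ).subtype.comp (LinearMap.snd ℤ ℤ (LinearMap.ker φ))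
  have hf_apply : ∀ t x, f (t, x) = t • g + x.1 := fun t x => rfl
  have hφf : ∀ p, φ (f p) = p.1 := by
    rintro ⟨t, x, hx⟩
    rw [LinearMap.mem_ker] at hx
    rw [hf_apply, map_add, LinearMap.map_smul, hφg, hx]
    simp
  have hbij : Function.Bijective f := by
    constructor
    · intro p q hpq
      have h1 : p.1 = q.1 := by rw [← hφf p, ← hφf q, hpq]
      have h2 : p.2 = q.2 := by
        have := hpq
        rw [hf_apply, hf_apply, h1] at this
        exact Subtype.ext (add_left_cancel this)
      exact Prod.ext h1 h2
    · intro y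
      refine ⟨(φ y, ⟨y - φ y • g, ?_⟩), ?_⟩
      · rw [LinearMap.mem_ker, map_sub, LinearMap.map_smul, hφg, smul_eq_mul, mul_one, sub_self]
      · rw [hf_apply]
        show φ y • g + (y - φ y • g) = y
        abel
  let e := LinearEquiv.ofBijective f hbij
  -- basis of ℤ^{m+1}
  let B : Module.Basis (Unit ⊕ Fin k) ℤ (Fin (m+1) → ℤ) := ((Module.Basis.singleton Unit ℤ).prod bk).map e
  have hBg : B (Sum.inl ()) = g := by
    have h1 : ((Module.Basis.singleton Unit ℤ).prod bk) (Sum.inl ()) = ((1 : ℤ), (0 : LinearMap.ker φ)) := by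
      ext <;> simp [Module.Basis.prod_apply]
    rw [Module.Basis.map_apply, h1]
    show f (1, 0) = g
    rw [hf_apply 1 0]
    simp
  -- reindex so that g sits at Fin.last m
  let σ0 : (Unit ⊕ Fin k) ≃ Fin (m+1) := B.indexEquiv (Pi.basisFun ℤ (Fin (m+1)))
  let σ : (Unit ⊕ Fin k) ≃ Fin (m+1) := σ0.trans (Equiv.swap (σ0 (Sum.inl ())) (Fin.last m))
  have hσ : σ (Sum.inl ()) = Fin.last m := by simp [σ]
  let B' : Module.Basis (Fin (m+1)) ℤ (Fin (m+1) → ℤ) := B.reindex σ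
  have hB' : B' (Fin.last m) = g := by
    rw [Module.Basis.reindex_apply, ← hσ, Equiv.symm_apply_apply, hBg]
  -- the matrix whose rows are the basis vectors
  let M : Matrix (Fin (m+1)) (Fin (m+1)) ℤ := Matrix.of fun i j => B' i j
  have hMrow : M (Fin.last m) = g := by funext j; exact congrFun hB' j
  have hdet : IsUnit M.det := by
    have : Invertible ((Pi.basisFun ℤ (Fin (m+1))).toMatrix B') :=
      (Pi.basisFun ℤ (Fin (m+1))).invertibleToMatrix B'
    have h2 : IsUnit ((Pi.basisFun ℤ (Fin (m+1))).toMatrix B').det :=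
      (Matrix.isUnit_iff_isUnit_det _).mp (isUnit_of_invertible _)
    have h3 : (Pi.basisFun ℤ (Fin (m+1))).toMatrix B' = M.transpose := by
      funext i j
      simp [Module.Basis.toMatrix_apply, M, Matrix.transpose_apply]
    rwa [h3, Matrix.det_transpose] at h2
  rw [Int.isUnit_iff] at hdet
  rcases hdet with hdet | hdet
  · exact ⟨⟨M, hdet⟩, hMrow⟩
  · -- negate row 0 to fix the sign
    have h0 : (0 : Fin (m+1)) ≠ Fin.last m := by
      simp [Fin.ext_iff, Fin.last]
      omega
    refine ⟨⟨M.updateRow 0 (-(M 0)), ?_⟩, ?_⟩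
    · have : -(M 0) = (-1 : ℤ) • (M 0) := by funext j; simp
      rw [this, Matrix.det_updateRow_smul, Matrix.updateRow_eq_self, hdet]
      ring
    · show (M.updateRow 0 (-(M 0))) (Fin.last m) = g
      rw [Matrix.updateRow_ne (Ne.symm h0), hMrow]

/-- For `g ∈ Γ₀(N)`, the bottom-right corner of `g` is a unit mod `N`. -/
lemma corner_isUnit {n N : ℕ} (g : SL (n+1)) (hg : Gamma0 N g) :
    IsUnit ((g.1 (Fin.last n) (Fin.last n) : ℤ) : ZMod N) := by
  rw [← Ideal.span_singleton_eq_top]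
  have hp := brow_primitive (N := N) g
  rw [_root_.IsPrimitive] at hp
  rw [eq_top_iff, ← hp]
  refine Ideal.span_le.mpr ?_
  rintro x ⟨j, rfl⟩
  dsimp only
  by_cases hj : j = Fin.last n
  · subst hj; exact Ideal.subset_span rfl
  · have : (((g.1 (Fin.last n) j : ℤ) : ZMod N)) = 0 := by
      rw [ZMod.intCast_zmod_eq_zero_iff_dvd]
      exact hg j hj
    rw [this]
    exact (Ideal.span _).zero_mem

lemma vrow_gamma0_mul {n N : ℕ} (g A : SL (n+1)) (hg : Gamma0 N g) :
    vrow (N := N) (g * A) =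
      fun j => ((g.1 (Fin.last n) (Fin.last n) : ℤ) : ZMod N) * vrow (N := N) A j := by
  funext j
  rw [vrow_mul]
  show Matrix.vecMul (vrow g) (modN A) j = _
  rw [Matrix.vecMul]
  show dotProduct (vrow g) (fun i => modN A i j) = _
  rw [dotProduct]
  rw [Finset.sum_eq_single (Fin.last n)]
  · rfl
  · intro i _ hi
    have : (vrow (N := N) g) i = 0 := by
      show (((g.1 (Fin.last n) i : ℤ) : ZMod N)) = 0
      rw [ZMod.intCast_zmod_eq_zero_iff_dvd]
      exact hg i hi
    rw [this, zero_mul]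
  · intro h; exact absurd (Finset.mem_univ _) h

/-- For any subgroup `H ≤ SL_{n+1}(ℤ)`, the bottom row map induces a bijection between
the double cosets `Γ₀(N)\SL_{n+1}(ℤ)/H` and the orbits of the right `H`-action on
`ℙ^n(ℤ/Nℤ)`, sending `Γ₀(N)γH` to the `H`-orbit of `𝔟(γ)`:  two elements lie in the
same double coset iff their bottom rows lie in the same `H`-orbit, and every point of
`ℙ^n(ℤ/Nℤ)` lies in the `H`-orbit of some `𝔟(γ)`. -/
theorem double_cosets_biject_with_orbits (n N : ℕ) (hn : 1 ≤ n) (hN : 1 ≤ N)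
    (H : Subgroup (SL (n + 1))) :
    (∀ γ γ' : SL (n + 1),
      (∃ g h : SL (n + 1), Gamma0 N g ∧ h ∈ H ∧ γ' = g * γ * h) ↔
        ∃ h ∈ H, ract (brow N γ) h = brow N γ') ∧
    (∀ x : Proj (n + 1) N, ∃ γ : SL (n + 1), ∃ h ∈ H, ract (brow N γ) h = x)     := by
  constructor
  · intro γ γ'
    constructor
    · rintro ⟨g, h, hg, hH, rfl⟩
      refine ⟨h, hH, ?_⟩
      obtain ⟨u, hu⟩ := corner_isUnit (N := N) g hg
      rw [ract, brow, brow]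
      refine Quotient.sound ⟨u, ?_⟩
      show (fun j => (((g * γ * h).1 (Fin.last n) j : ℤ) : ZMod N)) = _
      have : (fun j => (((g * γ * h).1 (Fin.last n) j : ℤ) : ZMod N)) = vrow (N := N) (g * (γ * h)) := by
        rw [mul_assoc]; rfl
      rw [this, vrow_gamma0_mul g (γ * h) hg, hu]
      funext j
      rw [vrow_mul]
      rfl
    · rintro ⟨h, hH, heq⟩
      refine ⟨γ' * (γ * h)⁻¹, h, ?_, hH, by group⟩
      have hrel : ractFun (N := N) h ⟨vrow γ, brow_primitive γ⟩ ≈ ⟨vrow γ', brow_primitive γ'⟩ := by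
        apply Quotient.exact
        exact heq
      obtain ⟨u, hu⟩ := hrel
      replace hu : vrow (N := N) γ' = fun i => (u : ZMod N) * Matrix.vecMul (vrow γ) (modN h) i := hu
      intro j hj
      rw [← ZMod.intCast_zmod_eq_zero_iff_dvd]
      show vrow (N := N) (γ' * (γ * h)⁻¹) j = 0
      rw [vrow_mul, Matrix.vecMul]
      show dotProduct (vrow γ') (fun i => modN (γ*h)⁻¹ i j) = 0
      rw [dotProduct]
      have : ∀ i, vrow (N := N) γ' i * modN (γ*h)⁻¹ i j
          = (u : ZMod N) * (vrow (N := N) (γ*h) i * modN (γ*h)⁻¹ i j) := by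
        intro i
        rw [hu, ← vrow_mul, mul_assoc]
      rw [Finset.sum_congr rfl fun i _ => this i, ← Finset.mul_sum]
      have h1 : (∑ i, vrow (N := N) (γ*h) i * modN (γ*h)⁻¹ i j)
          = vrow (N := N) ((γ*h) * (γ*h)⁻¹) j := by
        conv_rhs => rw [vrow_mul]
        rfl
      rw [h1, mul_inv_cancel]
      have : vrow (N := N) (1 : SL (n+1)) j = 0 := by
        show ((((1 : SL (n+1)).1 (Fin.last n) j : ℤ)) : ZMod N) = 0
        rw [Matrix.SpecialLinearGroup.coe_one, Matrix.one_apply_ne' hj]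
        simp
      rw [this, mul_zero]
  · intro x
    obtain ⟨⟨v, hv⟩, rfl⟩ := Quotient.exists_rep x
    by_cases hN1 : N = 1
    · subst hN1
      refine ⟨1, 1, H.one_mem, ?_⟩
      rw [ract, brow]
      exact Quotient.sound ⟨1, funext fun i => Subsingleton.elim _ _⟩
    · haveI : NeZero N := ⟨by omega⟩
      haveI : Fact (1 < N) := ⟨by omega⟩
      set a : Fin (n+1) → ℤ := fun j => (v j).cast with ha_def
      have ha : ∀ j, ((a j : ℤ) : ZMod N) = v j := fun j => ZMod.intCast_zmod_cast (v j)
      -- the ideal generated by N and the lifts is everything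
      have hspan : (1 : ℤ) ∈ Ideal.span (insert ((N : ℕ) : ℤ) (Set.range a)) := by
        have hv1 : (1 : ZMod N) ∈ Ideal.span (Set.range v) := by
          rw [_root_.IsPrimitive] at hv; rw [hv]; trivial
        rw [Ideal.span, Submodule.mem_span_range_iff_exists_fun] at hv1
        obtain ⟨c, hc⟩ := hv1
        set c' : Fin (n+1) → ℤ := fun j => (c j).cast with hc'_def
        have hcast : ((∑ j, c' j * a j - 1 : ℤ) : ZMod N) = 0 := by
          push_cast
          have h2 : ∀ j ∈ Finset.univ, ((c' j : ℤ) : ZMod N) * ((a j : ℤ) : ZMod N)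
              = c j • v j := by
            intro j _
            rw [ZMod.intCast_zmod_cast, ha j, smul_eq_mul]
          rw [Finset.sum_congr rfl h2, hc]
          ring
        obtain ⟨t, ht⟩ := (ZMod.intCast_zmod_eq_zero_iff_dvd _ N).mp hcast
        have h2 : (1 : ℤ) = ∑ j, c' j * a j - (N : ℤ) * t := by linarith [ht]
        rw [h2]
        refine Ideal.sub_mem _
          (Ideal.sum_mem _ fun j _ => Ideal.mul_mem_left _ _
            (Ideal.subset_span (Set.mem_insert_of_mem _ ⟨j, rfl⟩)))
          (Ideal.mul_mem_right _ _ (Ideal.subset_span (Set.mem_insert _ _)))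
      set d : ℤ := Finset.univ.gcd a with hd_def
      -- d is coprime to N
      have hcop : IsCoprime d ((N : ℕ) : ℤ) := by
        rw [Int.isCoprime_iff_gcd_eq_one]
        have he1 : ((Int.gcd d N : ℕ) : ℤ) ∣ 1 := by
          have hle : Ideal.span (insert ((N : ℕ) : ℤ) (Set.range a)) ≤
              Ideal.span {((Int.gcd d N : ℕ) : ℤ)} := by
            refine Ideal.span_le.mpr ?_
            rintro x (rfl | ⟨j, rfl⟩)
            · exact Ideal.mem_span_singleton.mpr (Int.gcd_dvd_right _ _)
            · exact Ideal.mem_span_singleton.mpr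
                (dvd_trans (Int.gcd_dvd_left _ _) (Finset.gcd_dvd (Finset.mem_univ j)))
          exact Ideal.mem_span_singleton.mp (hle hspan)
        have := Int.ofNat_dvd.mp (by exact_mod_cast he1)
        exact Nat.dvd_one.mp this
      have hu : IsUnit ((d : ℤ) : ZMod N) := by
        have h3 := hcop.map (Int.castRingHom (ZMod N))
        have h4 : (Int.castRingHom (ZMod N)) ((N : ℕ) : ℤ) = 0 := by
          simp [ZMod.natCast_self]
        rw [h4] at h3
        rw [isCoprime_zero_right] at h3
        exact h3
      obtain ⟨u, hu_eq⟩ := hu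
      -- extract the gcd
      obtain ⟨g, hga, hg1⟩ := Finset.extract_gcd a Finset.univ_nonempty
      obtain ⟨γ, hγ⟩ := exists_SL_row hn g (span_range_top_of_gcd_one g hg1)
      refine ⟨γ, 1, H.one_mem, ?_⟩
      rw [ract, brow]
      refine Quotient.sound ⟨u, funext fun i => ?_⟩
      show v i = (u : ZMod N) * (Matrix.vecMul _ (modN (1 : SL (n+1)))) i
      rw [modN_one, Matrix.vecMul_one, hu_eq]
      show v i = ((d : ℤ) : ZMod N) * ((γ.1 (Fin.last n) i : ℤ) : ZMod N)
      rw [hγ, ← Int.cast_mul, ← hga i (Finset.mem_univ i), ha i]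
end

section
/- Let H and K be subgroups of SL_n(ℤ), let α, γ₀ ∈ SL_n(ℤ), and set Γ_σ = (γ₀Hγ₀⁻¹) ∩ Γ₀(N) and C = (α⁻¹Hα) ∩ K. Let O = 𝔟(γ₀)·H ⊆ ℙ^{n-1}(ℤ/Nℤ) and consider the translated set O·α. Then there is a bijection between the set of orbits of Γ_σ acting by left multiplication on the set of left cosets {xK : x ∈ γ₀HαK} and the set of orbits of the right action of C on O·α, under which the Γ_σ-orbit of the coset γ₀hαK (for h ∈ H) corresponds to the C-orbit of 𝔟(γ₀hα). -/
open Matrix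

lemma brow_mul {n N : ℕ} (x y : SL (n + 1)) :
    brow N (x * y) = ract (brow N x) y := by
  unfold brow ract
  erw [Quotient.map_mk]
  apply Quotient.sound
  refine ⟨1, ?_⟩
  funext j
  show Matrix.vecMul (fun j => ((x.1 (Fin.last n) j : ℤ) : ZMod N)) (modN y) j
      = 1 * (((x * y).1 (Fin.last n) j : ℤ) : ZMod N)
  rw [one_mul]
  simp only [Matrix.vecMul, dotProduct, modN, Matrix.map_apply,
    Matrix.SpecialLinearGroup.coe_mul, Matrix.mul_apply]
  push_cast
  rfl

lemma gamma0_iff_brow {n N : ℕ} (g : SL (n + 1)) :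
    Gamma0 N g ↔ brow N g = brow N 1 := by
  constructor
  · intro hg
    apply Quotient.sound
    set v : Fin (n + 1) → ZMod N := fun j => ((g.1 (Fin.last n) j : ℤ) : ZMod N) with hv
    have hzero : ∀ j, j ≠ Fin.last n → v j = 0 := fun j hj => by
      simpa [hv] using (ZMod.intCast_zmod_eq_zero_iff_dvd _ N).2 (hg j hj)
    have hprim : Ideal.span (Set.range v) = ⊤ := brow_primitive g
    have hle : Ideal.span (Set.range v) ≤ Ideal.span {v (Fin.last n)} := by
      refine Ideal.span_le.2 ?_
      rintro x ⟨j, rfl⟩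
      by_cases hj : j = Fin.last n
      · subst hj; exact Ideal.subset_span rfl
      · rw [hzero j hj]; exact Ideal.zero_mem _
    have hunit : IsUnit (v (Fin.last n)) := by
      rw [← Ideal.span_singleton_eq_top]
      exact top_le_iff.1 (hprim ▸ hle)
    obtain ⟨u, hu⟩ := hunit
    refine ⟨u⁻¹, ?_⟩
    funext j
    show (((1 : Matrix (Fin (n+1)) (Fin (n+1)) ℤ) (Fin.last n) j : ℤ) : ZMod N)
        = (u⁻¹ : (ZMod N)ˣ) * v j
    by_cases hj : j = Fin.last n
    · subst hj
      rw [Matrix.one_apply_eq, ← hu]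
      simp
    · rw [Matrix.one_apply_ne' (by simpa [eq_comm] using hj), hzero j hj]
      simp
  · intro hg j hj
    obtain ⟨u, hu⟩ := Quotient.exact hg
    have := congrFun hu j
    simp only at this
    have h1 : (((1 : Matrix (Fin (n+1)) (Fin (n+1)) ℤ) (Fin.last n) j : ℤ) : ZMod N) = 0 := by
      rw [Matrix.one_apply_ne' (by simpa [eq_comm] using hj)]
      simp
    rw [← ZMod.intCast_zmod_eq_zero_iff_dvd]
    have h2 : (u : ZMod N) * ((g.1 (Fin.last n) j : ℤ) : ZMod N) = 0 := by
      rw [← this]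
      exact h1
    exact (Units.mul_right_eq_zero u).1 h2

/-- Let `H, K ≤ SL_{n+1}(ℤ)`, `α, γ₀ ∈ SL_{n+1}(ℤ)`, `Γ_σ = (γ₀Hγ₀⁻¹) ∩ Γ₀(N)`,
`C = (α⁻¹Hα) ∩ K`, and `O = 𝔟(γ₀)·H ⊆ ℙ^n(ℤ/Nℤ)`.  The assignment sending the
`Γ_σ`-orbit of the left coset `γ₀hαK` to the `C`-orbit of `𝔟(γ₀hα)` is a
(well-defined) bijection between the `Γ_σ`-orbits on the left cosets of `K` contained
in `γ₀HαK` and the `C`-orbits on `O·α`: the orbits of two cosets agree iff the orbits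
of the corresponding points agree, every coset of `K` in `γ₀HαK` is of the form
`(γ₀hα)K` with `h ∈ H`, and every point of `O·α` is of the form `𝔟(γ₀hα)` with
`h ∈ H`. -/
theorem orbit_bijection_facets (n N : ℕ) (hn : 1 ≤ n) (hN : 1 ≤ N)
    (H K : Subgroup (SL (n + 1))) (α γ₀ : SL (n + 1)) :
    (∀ h ∈ H, ∀ h' ∈ H,
      ((∃ g : SL (n + 1), ((∃ h'' ∈ H, g = γ₀ * h'' * γ₀⁻¹) ∧ Gamma0 N g) ∧
          (γ₀ * h' * α)⁻¹ * (g * (γ₀ * h * α)) ∈ K) ↔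
        (∃ c : SL (n + 1), ((α * c * α⁻¹ ∈ H) ∧ c ∈ K) ∧
          ract (brow N (γ₀ * h * α)) c = brow N (γ₀ * h' * α)))) ∧
    (∀ x : SL (n + 1), (∃ h ∈ H, ∃ k ∈ K, x = γ₀ * h * α * k) →
        ∃ h ∈ H, (γ₀ * h * α)⁻¹ * x ∈ K) ∧
    (∀ y : Proj (n + 1) N,
        (∃ a : Proj (n + 1) N, (∃ h ∈ H, ract (brow N γ₀) h = a) ∧ y = ract a α) →
          ∃ h ∈ H, y = brow N (γ₀ * h * α)) := by
  refine ⟨?_, ?_, ?_⟩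
  · intro h hH h' hH'
    constructor
    · rintro ⟨g, ⟨⟨h'', hh'', hg⟩, hΓ⟩, hk⟩
      refine ⟨(γ₀ * h * α)⁻¹ * g⁻¹ * (γ₀ * h' * α), ⟨?_, ?_⟩, ?_⟩
      · have e : α * ((γ₀ * h * α)⁻¹ * g⁻¹ * (γ₀ * h' * α)) * α⁻¹
            = h⁻¹ * h''⁻¹ * h' := by subst hg; group
        rw [e]
        exact H.mul_mem (H.mul_mem (H.inv_mem hH) (H.inv_mem hh'')) hH'
      · have e : (γ₀ * h * α)⁻¹ * g⁻¹ * (γ₀ * h' * α)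
            = ((γ₀ * h' * α)⁻¹ * (g * (γ₀ * h * α)))⁻¹ := by group
        rw [e]
        exact K.inv_mem hk
      · have hb1 : brow N g = brow N 1 := (gamma0_iff_brow g).1 hΓ
        have hbinv : brow N g⁻¹ = brow N 1 := by
          have h1 : brow N (g * g⁻¹) = ract (brow N g) g⁻¹ := brow_mul g g⁻¹
          have h2 : brow N (1 * g⁻¹) = ract (brow N 1) g⁻¹ := brow_mul 1 g⁻¹
          rw [mul_inv_cancel, hb1] at h1
          rw [one_mul] at h2
          exact h2.trans h1.symm
        have e : (γ₀ * h * α) * ((γ₀ * h * α)⁻¹ * g⁻¹ * (γ₀ * h' * α))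
            = g⁻¹ * (γ₀ * h' * α) := by group
        rw [← brow_mul, e, brow_mul, hbinv, ← brow_mul, one_mul]
    · rintro ⟨c, ⟨hcH, hcK⟩, hc⟩
      rw [← brow_mul] at hc
      refine ⟨(γ₀ * h' * α) * c⁻¹ * (γ₀ * h * α)⁻¹, ⟨⟨h' * (α * c * α⁻¹)⁻¹ * h⁻¹,
        H.mul_mem (H.mul_mem hH' (H.inv_mem hcH)) (H.inv_mem hH), by group⟩, ?_⟩, ?_⟩
      · rw [gamma0_iff_brow]
        calc brow N ((γ₀ * h' * α) * c⁻¹ * (γ₀ * h * α)⁻¹)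
            = brow N ((γ₀ * h' * α) * (c⁻¹ * (γ₀ * h * α)⁻¹)) := by rw [mul_assoc]
          _ = ract (brow N (γ₀ * h' * α)) (c⁻¹ * (γ₀ * h * α)⁻¹) := brow_mul _ _
          _ = ract (brow N (γ₀ * h * α * c)) (c⁻¹ * (γ₀ * h * α)⁻¹) := by rw [hc]
          _ = brow N ((γ₀ * h * α * c) * (c⁻¹ * (γ₀ * h * α)⁻¹)) := (brow_mul _ _).symm
          _ = brow N 1 := by rw [show (γ₀ * h * α * c) * (c⁻¹ * (γ₀ * h * α)⁻¹)
                = (1 : SL (n + 1)) from by group]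
      · have e : (γ₀ * h' * α)⁻¹ * ((γ₀ * h' * α) * c⁻¹ * (γ₀ * h * α)⁻¹ * (γ₀ * h * α))
            = c⁻¹ := by group
        rw [e]
        exact K.inv_mem hcK
  · rintro x ⟨h, hH, k, hK, rfl⟩
    refine ⟨h, hH, ?_⟩
    have e : (γ₀ * h * α)⁻¹ * (γ₀ * h * α * k) = k := by group
    rw [e]
    exact hK
  · rintro y ⟨a, ⟨h, hH, rfl⟩, rfl⟩
    refine ⟨h, hH, ?_⟩
    rw [brow_mul, brow_mul]
end
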